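/- Under the hypotheses of Theorem 3 (K ≥ 2, σ² > 0, 0 < C_1 ≤ … ≤ C_K, D_k ∈ (0,1), P > 0, P_c > 0, a*_k(θ) and N(θ) defined by the recursion of Theorem 2, and EE(θ) = N(θ)/(θ·P + P_c)), let [θ_min, 1] with 0 < θ_min ≤ 1 be a compact interval on which x*_k(θ) ≥ 0 for all k ≤ K−1. Then EE attains its maximum over [θ_min, 1] at a unique point θ* ∈ [θ_min, 1]; that is, there exists a unique θ* with EE(θ) < EE(θ*) for all θ ∈ [θ_min, 1] with θ ≠ θ*. -/

import Mathlib

open Real Set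

lemma helper_concave {a b s : ℝ} (hb : 0 < b) (hab : b ≤ a) (hs : 0 < s) :
    ConcaveOn ℝ (Set.Ici 0) (fun x => Real.log (a * x + s) - Real.log (b * x + s)) := by
  have ha : 0 < a := lt_of_lt_of_le hb hab
  have hpa : ∀ x : ℝ, x ∈ Set.Ici (0:ℝ) → 0 < a * x + s := fun x hx =>
    add_pos_of_nonneg_of_pos (mul_nonneg ha.le hx) hs
  have hpb : ∀ x : ℝ, x ∈ Set.Ici (0:ℝ) → 0 < b * x + s := fun x hx =>
    add_pos_of_nonneg_of_pos (mul_nonneg hb.le hx) hs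
  have hint : interior (Set.Ici (0:ℝ)) = Set.Ioi 0 := interior_Ici
  refine concaveOn_of_hasDerivWithinAt2_nonpos (f' := fun x => a / (a * x + s) - b / (b * x + s))
    (f'' := fun x => b * b / ((b * x + s) ^ 2) - a * a / ((a * x + s) ^ 2))
    (convex_Ici 0) ?_ ?_ ?_ ?_
  · exact (((continuous_const.mul continuous_id).add continuous_const).continuousOn.log
      (fun x hx => (hpa x hx).ne')).sub
      (((continuous_const.mul continuous_id).add continuous_const).continuousOn.log
      (fun x hx => (hpb x hx).ne'))
  · intro x hx
    rw [hint] at hx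
    have h1 : HasDerivAt (fun x : ℝ => a * x + s) a x := by
      simpa using ((hasDerivAt_id x).const_mul a).add_const s
    have h2 : HasDerivAt (fun x : ℝ => b * x + s) b x := by
      simpa using ((hasDerivAt_id x).const_mul b).add_const s
    exact ((h1.log (hpa x (Set.mem_Ici.mpr (le_of_lt hx))).ne').sub (h2.log (hpb x (Set.mem_Ici.mpr (le_of_lt hx))).ne')).hasDerivWithinAt
  · intro x hx
    rw [hint] at hx
    have h1 : HasDerivAt (fun x : ℝ => a * x + s) a x := by
      simpa using ((hasDerivAt_id x).const_mul a).add_const s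
    have h2 : HasDerivAt (fun x : ℝ => b * x + s) b x := by
      simpa using ((hasDerivAt_id x).const_mul b).add_const s
    have d1 : HasDerivAt (fun x : ℝ => a / (a * x + s))
        ((0 * (a * x + s) - a * a) / (a * x + s) ^ 2) x :=
      (hasDerivAt_const x a).div h1 (hpa x (Set.mem_Ici.mpr hx.le)).ne'
    have d2 : HasDerivAt (fun x : ℝ => b / (b * x + s))
        ((0 * (b * x + s) - b * b) / (b * x + s) ^ 2) x :=
      (hasDerivAt_const x b).div h2 (hpb x (Set.mem_Ici.mpr hx.le)).ne'
    have := (d1.sub d2).hasDerivWithinAt (s := interior (Set.Ici (0:ℝ)))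
    refine this.congr_deriv ?_
    ring
  · intro x hx
    rw [hint] at hx
    have hxa := hpa x (Set.mem_Ici.mpr hx.le)
    have hxb := hpb x (Set.mem_Ici.mpr hx.le)
    rw [sub_nonpos, div_le_div_iff₀ (by positivity) (by positivity)]
    have key : b * (a * x + s) ≤ a * (b * x + s) := by nlinarith [mul_nonneg (sub_nonneg.mpr hab) hs.le]
    have key2 := mul_le_mul key key (by positivity) (by positivity)
    nlinarith [key2]

lemma helper_sum_concave {ι : Type*} (t : Finset ι) {s : Set ℝ} (hs : Convex ℝ s)
    (f : ι → ℝ → ℝ) (h : ∀ i ∈ t, ConcaveOn ℝ s (f i)) :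
    ConcaveOn ℝ s (fun x => ∑ i ∈ t, f i x) := by
  classical
  induction t using Finset.induction with
  | empty => simpa using concaveOn_const 0 hs
  | @insert i t hni ih =>
    simp only [Finset.sum_insert hni]
    exact (h i (Finset.mem_insert_self i t)).add (ih fun j hj => h j (Finset.mem_insert_of_mem hj))

/-- Unique maximizer of the energy efficiency over the feasible range `[θ_min, 1]`:
under the hypotheses of Theorem 3, `EE(θ) = N(θ)/(θ P + P_c)` attains its maximum over
`[θ_min, 1]` at a unique point `θ*`, i.e. there is a unique `θ* ∈ [θ_min, 1]` with
`EE(θ) < EE(θ*)` for all other `θ ∈ [θ_min, 1]`. -/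
theorem stmt_16 (K : ℕ) (hK : 2 ≤ K) (σ2 : ℝ) (hσ : 0 < σ2)
    (C : ℕ → ℝ)
    (hCpos : ∀ k ∈ Finset.Icc 1 K, 0 < C k)
    (hCmono : ∀ k ∈ Finset.Icc 1 (K - 1), C k ≤ C (k + 1))
    (D : ℕ → ℝ) (hD : ∀ k ∈ Finset.Icc 1 K, D k ∈ Set.Ioo (0 : ℝ) 1)
    (P Pc : ℝ) (hP : 0 < P) (hPc : 0 < Pc)
    (astar : ℝ → ℕ → ℝ)
    (hastar : ∀ θ : ℝ, ∀ k ∈ Finset.Icc 1 (K - 1),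
      astar θ k = D k * (θ - ∑ i ∈ Finset.Ico 1 k, astar θ i) + D k * σ2 / C k)
    (hastarK : ∀ θ : ℝ, astar θ K = θ - ∑ i ∈ Finset.Ico 1 K, astar θ i)
    (xstar : ℝ → ℕ → ℝ)
    (hxstar : ∀ θ k, xstar θ k = ∑ i ∈ Finset.Ioc k K, astar θ i)
    (N : ℝ → ℝ)
    (hN : ∀ θ : ℝ, N θ = Real.logb 2 (C 1 * θ + σ2) +
      ∑ k ∈ Finset.Icc 1 (K - 1),
        (Real.logb 2 (C (k + 1) * xstar θ k + σ2) -
          Real.logb 2 (C k * xstar θ k + σ2)))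
    (EE : ℝ → ℝ) (hEE : ∀ θ : ℝ, EE θ = N θ / (θ * P + Pc))
    (θmin : ℝ) (hθmin : 0 < θmin) (hθmin1 : θmin ≤ 1)
    (hx : ∀ θ ∈ Set.Icc θmin 1, ∀ k ∈ Finset.Icc 1 (K - 1), 0 ≤ xstar θ k) :
    ∃! θstar : ℝ, θstar ∈ Set.Icc θmin 1 ∧
      ∀ θ ∈ Set.Icc θmin 1, θ ≠ θstar → EE θ < EE θstar := by
  set s : Set ℝ := Set.Icc θmin 1 with hs
  have hscvx : Convex ℝ s := convex_Icc _ _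
  -- partial sums of astar are affine in θ
  have hsum : ∀ k : ℕ, k ≤ K - 1 →
      ∃ a b : ℝ, ∀ θ : ℝ, ∑ i ∈ Finset.Ico 1 (k + 1), astar θ i = a * θ + b := by
    intro k
    induction k with
    | zero => exact fun _ => ⟨0, 0, fun θ => by simp⟩
    | succ n ih =>
      intro hn
      obtain ⟨a, b, hab⟩ := ih (by omega)
      refine ⟨a + D (n + 1) * (1 - a), b - D (n + 1) * b + D (n + 1) * σ2 / C (n + 1),
        fun θ => ?_⟩
      rw [Finset.sum_Ico_succ_top (by omega),
        hastar θ (n + 1) (Finset.mem_Icc.mpr ⟨by omega, hn⟩), hab θ]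
      ring
  -- xstar is affine in θ
  have hxaff : ∀ k ∈ Finset.Icc 1 (K - 1), ∃ a b : ℝ, ∀ θ, xstar θ k = a * θ + b := by
    intro k hk
    obtain ⟨hk1, hk2⟩ := Finset.mem_Icc.mp hk
    obtain ⟨a, b, hab⟩ := hsum k hk2
    refine ⟨1 - a, -b, fun θ => ?_⟩
    have h1 : ∑ i ∈ Finset.Ico 1 (K + 1), astar θ i = θ := by
      rw [Finset.sum_Ico_succ_top (by omega), hastarK θ]; ring
    have h2 : ∑ i ∈ Finset.Ico 1 (k + 1), astar θ i
        + ∑ i ∈ Finset.Ico (k + 1) (K + 1), astar θ i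
        = ∑ i ∈ Finset.Ico 1 (K + 1), astar θ i :=
      Finset.sum_Ico_consecutive _ (by omega) (by omega)
    have h3 : Finset.Ioc k K = Finset.Ico (k + 1) (K + 1) := by
      ext i; simp only [Finset.mem_Ioc, Finset.mem_Ico]; omega
    rw [hxstar θ k, h3]
    linear_combination h2 + h1 - hab θ
  have hC1 : 0 < C 1 := hCpos 1 (Finset.mem_Icc.mpr ⟨le_refl 1, by omega⟩)
  have hp1 : ∀ θ ∈ s, 0 < C 1 * θ + σ2 := fun θ hθ =>
    add_pos (mul_pos hC1 (lt_of_lt_of_le hθmin hθ.1)) hσ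
  have hmemK : ∀ k ∈ Finset.Icc 1 (K - 1), k ∈ Finset.Icc 1 K := by
    intro k hk; rw [Finset.mem_Icc] at hk ⊢; omega
  have hmemK1 : ∀ k ∈ Finset.Icc 1 (K - 1), k + 1 ∈ Finset.Icc 1 K := by
    intro k hk; rw [Finset.mem_Icc] at hk ⊢; omega
  have hpk : ∀ θ ∈ s, ∀ k ∈ Finset.Icc 1 (K - 1), 0 < C k * xstar θ k + σ2 := fun θ hθ k hk =>
    add_pos_of_nonneg_of_pos (mul_nonneg (hCpos k (hmemK k hk)).le (hx θ hθ k hk)) hσ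
  have hpk1 : ∀ θ ∈ s, ∀ k ∈ Finset.Icc 1 (K - 1), 0 < C (k + 1) * xstar θ k + σ2 :=
    fun θ hθ k hk =>
    add_pos_of_nonneg_of_pos (mul_nonneg (hCpos (k + 1) (hmemK1 k hk)).le (hx θ hθ k hk)) hσ
  -- M : log-version of N
  obtain ⟨M, hM⟩ : ∃ M : ℝ → ℝ, ∀ θ, M θ = Real.log (C 1 * θ + σ2) +
      ∑ k ∈ Finset.Icc 1 (K - 1),
        (Real.log (C (k + 1) * xstar θ k + σ2) - Real.log (C k * xstar θ k + σ2)) :=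
    ⟨_, fun θ => rfl⟩
  have hlog2 : (0:ℝ) < Real.log 2 := Real.log_pos one_lt_two
  have hMN : ∀ θ, N θ = M θ / Real.log 2 := by
    intro θ
    rw [hN θ, hM θ, add_div, Finset.sum_div]
    simp only [Real.logb]
    congr 1
    exact Finset.sum_congr rfl fun k _ => (sub_div _ _ _).symm
  -- strict concavity of M on s
  have hterm : ∀ k ∈ Finset.Icc 1 (K - 1), ConcaveOn ℝ s
      (fun θ => Real.log (C (k + 1) * xstar θ k + σ2)
        - Real.log (C k * xstar θ k + σ2)) := by
    intro k hk
    obtain ⟨a, b, hab⟩ := hxaff k hk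
    have hcc := helper_concave (hCpos k (hmemK k hk)) (hCmono k hk) hσ
    refine ⟨hscvx, ?_⟩
    intro x hxs y hys la mu hla hmu hsum1
    have hccx : xstar x k ∈ Set.Ici (0:ℝ) := hx x hxs k hk
    have hccy : xstar y k ∈ Set.Ici (0:ℝ) := hx y hys k hk
    have key := hcc.2 hccx hccy hla hmu hsum1
    have hco : xstar (la * x + mu * y) k = la * xstar x k + mu * xstar y k := by
      rw [hab, hab, hab]; linear_combination (-b) * hsum1
    simp only [smul_eq_mul] at key ⊢
    rw [hco]
    exact key
  have hf1 : StrictConcaveOn ℝ s (fun θ => Real.log (C 1 * θ + σ2)) := by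
    refine ⟨hscvx, ?_⟩
    intro x hxs y hys hxy la mu hla hmu hsum1
    have hne : C 1 * x + σ2 ≠ C 1 * y + σ2 := by
      intro h; exact hxy (mul_left_cancel₀ hC1.ne' (by linarith))
    have key := strictConcaveOn_log_Ioi.2 (hp1 x hxs) (hp1 y hys) hne hla hmu hsum1
    simp only [smul_eq_mul] at key ⊢
    have : la * (C 1 * x + σ2) + mu * (C 1 * y + σ2) = C 1 * (la * x + mu * y) + σ2 := by
      linear_combination σ2 * hsum1
    rw [this] at key
    exact key
  have hMsc : StrictConcaveOn ℝ s M := by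
    have := hf1.add_concaveOn (helper_sum_concave (Finset.Icc 1 (K - 1)) hscvx _ hterm)
    exact this.congr fun θ _ => (hM θ).symm
  -- denominator
  have hd : ∀ θ ∈ s, 0 < θ * P + Pc := fun θ hθ =>
    add_pos (mul_pos (lt_of_lt_of_le hθmin hθ.1) hP) hPc
  -- continuity of EE on s
  have hMc : ContinuousOn M s := by
    have base : ContinuousOn (fun θ : ℝ => Real.log (C 1 * θ + σ2)) s :=
      ((continuous_const.mul continuous_id).add continuous_const).continuousOn.log
        (fun θ hθ => (hp1 θ hθ).ne')
    have sumc : ContinuousOn (fun θ : ℝ => ∑ k ∈ Finset.Icc 1 (K - 1),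
        (Real.log (C (k + 1) * xstar θ k + σ2) - Real.log (C k * xstar θ k + σ2))) s := by
      apply continuousOn_finset_sum
      intro k hk
      obtain ⟨a, b, hab⟩ := hxaff k hk
      have hxc : Continuous (fun θ : ℝ => xstar θ k) := by
        have : (fun θ : ℝ => xstar θ k) = fun θ => a * θ + b := funext hab
        rw [this]
        exact (continuous_const.mul continuous_id).add continuous_const
      exact (((continuous_const.mul hxc).add continuous_const).continuousOn.log
        (fun θ hθ => (hpk1 θ hθ k hk).ne')).sub
        (((continuous_const.mul hxc).add continuous_const).continuousOn.log
        (fun θ hθ => (hpk θ hθ k hk).ne'))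
    exact (base.add sumc).congr fun θ _ => hM θ
  have hEEc : ContinuousOn EE s := by
    have : ContinuousOn (fun θ => M θ / Real.log 2 / (θ * P + Pc)) s :=
      (hMc.div_const _).div
        ((continuous_id.mul continuous_const).add continuous_const).continuousOn
        (fun θ hθ => (hd θ hθ).ne')
    exact this.congr fun θ _ => by rw [hEE θ, hMN θ]
  -- maximum exists
  obtain ⟨θs, hθs, hmax⟩ := isCompact_Icc.exists_isMaxOn
    (Set.nonempty_Icc.mpr hθmin1) hEEc
  have hmax' : ∀ θ ∈ s, EE θ ≤ EE θs := fun θ hθ => hmax hθ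
  -- strict maximality
  have hstrict : ∀ θ ∈ s, θ ≠ θs → EE θ < EE θs := by
    intro θ hθ hne
    by_contra hcon
    have heq : EE θ = EE θs := le_antisymm (hmax' θ hθ) (not_lt.mp hcon)
    set m := EE θs with hm
    have hdθ := hd θ hθ
    have hdθs := hd θs hθs
    have hMθ : M θ = m * (θ * P + Pc) * Real.log 2 := by
      have := heq
      rw [hEE θ, hMN θ] at this
      field_simp at this
      linarith [this]
    have hMθs : M θs = m * (θs * P + Pc) * Real.log 2 := by
      have : EE θs = m := rfl
      rw [hEE θs, hMN θs] at this
      field_simp at this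
      linarith [this]
    have hz : (1/2 : ℝ) • θ + (1/2 : ℝ) • θs ∈ s :=
      hscvx hθ hθs (by norm_num) (by norm_num) (by norm_num)
    have hkey := hMsc.2 hθ hθs hne (by norm_num : (0:ℝ) < 1/2) (by norm_num : (0:ℝ) < 1/2)
      (by norm_num)
    simp only [smul_eq_mul] at hkey hz
    set z := (1/2 : ℝ) * θ + (1/2 : ℝ) * θs with hzdef
    have hdz : 0 < z * P + Pc := hd z hz
    have hMz : m * (z * P + Pc) * Real.log 2 < M z := by
      calc m * (z * P + Pc) * Real.log 2
          = (1/2) * (m * (θ * P + Pc) * Real.log 2)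
            + (1/2) * (m * (θs * P + Pc) * Real.log 2) := by rw [hzdef]; ring
        _ = (1/2) * M θ + (1/2) * M θs := by rw [hMθ, hMθs]
        _ < M z := hkey
    have hEEz : m < EE z := by
      rw [hEE z, hMN z]
      rw [lt_div_iff₀ hdz, lt_div_iff₀ hlog2] at *
      · nlinarith [hMz]
    exact absurd (hmax' z hz) (not_le.mpr hEEz)
  refine ⟨θs, ⟨hθs, hstrict⟩, ?_⟩
  rintro y ⟨hys, hy⟩
  by_contra hne
  exact absurd (hy θs hθs (Ne.symm hne)) (not_lt.mpr (le_of_lt (hstrict y hys hne)))
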